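/- Let n, m be positive integers, let φ be a state on M_n and ψ a state on M_m, and let e ∈ M_n and f ∈ M_m be orthogonal projections. Then γ(e ⊗ f) = min{Re φ(e), Re ψ(f)}. -/

import Mathlib

open scoped ComplexOrder Kronecker Matrix
open Filter

noncomputable section

abbrev Mat (k : ℕ) := Matrix (Fin k) (Fin k) ℂ
abbrev Mat2 (n m : ℕ) := Matrix (Fin n × Fin m) (Fin n × Fin m) ℂ

/-- A state on a matrix algebra: a unital positive linear functional. -/
def IsState {ι : Type*} [Fintype ι] [DecidableEq ι] (ω : Matrix ι ι ℂ →ₗ[ℂ] ℂ) : Prop :=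
  ω 1 = 1 ∧ ∀ x, 0 ≤ ω (xᴴ * x)

/-- Loewner order: `A ≤ B` iff `B - A` is positive semidefinite. -/
def Loewner {ι : Type*} [Fintype ι] (A B : Matrix ι ι ℂ) : Prop := (B - A).PosSemidef

/-- An orthogonal projection: a hermitian idempotent. -/
def IsProjM {ι : Type*} [Fintype ι] (p : Matrix ι ι ℂ) : Prop := p.IsHermitian ∧ p * p = p

/-- A coupling of states `φ` and `ψ`. -/
def IsCoupling {n m : ℕ} (φ : Mat n →ₗ[ℂ] ℂ) (ψ : Mat m →ₗ[ℂ] ℂ)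
    (σ : Mat2 n m →ₗ[ℂ] ℂ) : Prop :=
  IsState σ ∧ (∀ a : Mat n, σ (a ⊗ₖ (1 : Mat m)) = φ a) ∧
    (∀ b : Mat m, σ ((1 : Mat n) ⊗ₖ b) = ψ b)

def alpha {n m : ℕ} (φ : Mat n →ₗ[ℂ] ℂ) (ψ : Mat m →ₗ[ℂ] ℂ) (T : Mat2 n m) : ℝ :=
  sSup {r : ℝ | ∃ σ, IsCoupling φ ψ σ ∧ (σ T).re = r}

def beta {n m : ℕ} (φ : Mat n →ₗ[ℂ] ℂ) (ψ : Mat m →ₗ[ℂ] ℂ) (T : Mat2 n m) : ℝ :=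
  sInf {r : ℝ | ∃ (a : Mat n) (b : Mat m), a.PosSemidef ∧ b.PosSemidef ∧
      Loewner T (a ⊗ₖ (1 : Mat m) + (1 : Mat n) ⊗ₖ b) ∧ (φ a + ψ b).re = r}

/-- For commuting projections `p ⊗ 1` and `1 ⊗ q`, the projection onto the sum of their ranges is
`p ⊗ 1 + 1 ⊗ q - p ⊗ q`. -/
def gamma {n m : ℕ} (φ : Mat n →ₗ[ℂ] ℂ) (ψ : Mat m →ₗ[ℂ] ℂ) (T : Mat2 n m) : ℝ :=
  sInf {r : ℝ | ∃ (p : Mat n) (q : Mat m), IsProjM p ∧ IsProjM q ∧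
      Loewner T (p ⊗ₖ (1 : Mat m) + (1 : Mat n) ⊗ₖ q - p ⊗ₖ q) ∧ (φ p + ψ q).re = r}

/-- The normalised trace, as a state on `M_k`. -/
def ntr (k : ℕ) : Mat k →ₗ[ℂ] ℂ := (k : ℂ)⁻¹ • Matrix.traceLinearMap (Fin k) ℂ ℂ

/-! ### Auxiliary lemmas -/

lemma kron_conjTranspose {n m : ℕ} (A : Mat n) (B : Mat m) :
    (A ⊗ₖ B)ᴴ = Aᴴ ⊗ₖ Bᴴ := by
  ext ⟨i, i'⟩ ⟨j, j'⟩
  simp [Matrix.conjTranspose_apply, Matrix.kroneckerMap_apply]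

lemma IsProjM.psd {ι : Type*} [Fintype ι] {p : Matrix ι ι ℂ} (hp : IsProjM p) :
    p.PosSemidef := by
  have h : p = pᴴ * p := by rw [hp.1.eq, hp.2]
  exact h ▸ Matrix.posSemidef_conjTranspose_mul_self p

lemma IsProjM.kron {n m : ℕ} {a : Mat n} {b : Mat m} (ha : IsProjM a) (hb : IsProjM b) :
    IsProjM (a ⊗ₖ b) := by
  constructor
  · show (a ⊗ₖ b)ᴴ = a ⊗ₖ b
    rw [kron_conjTranspose, ha.1.eq, hb.1.eq]
  · rw [← Matrix.mul_kronecker_mul, ha.2, hb.2]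

lemma IsProjM.one_sub {ι : Type*} [Fintype ι] [DecidableEq ι] {p : Matrix ι ι ℂ}
    (hp : IsProjM p) : IsProjM (1 - p) := by
  constructor
  · exact Matrix.isHermitian_one.sub hp.1
  · rw [sub_mul, one_mul, mul_sub, mul_one, hp.2]
    abel

lemma kron_eq_zero {n m : ℕ} {A : Mat n} {B : Mat m} (h : A ⊗ₖ B = 0) :
    A = 0 ∨ B = 0 := by
  by_contra hc
  push_neg at hc
  obtain ⟨hA, hB⟩ := hc
  have hA' : ∃ i j, A i j ≠ 0 := by
    by_contra hx; push_neg at hx; exact hA (by ext i j; simpa using hx i j)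
  have hB' : ∃ i j, B i j ≠ 0 := by
    by_contra hx; push_neg at hx; exact hB (by ext i j; simpa using hx i j)
  obtain ⟨i, j, hij⟩ := hA'
  obtain ⟨k, l, hkl⟩ := hB'
  have := congrFun (congrFun h (i, k)) (j, l)
  simp only [Matrix.kroneckerMap_apply, Matrix.zero_apply] at this
  rcases mul_eq_zero.mp this with h' | h'
  · exact hij h'
  · exact hkl h'

lemma psd_neg_eq_zero {ι : Type*} [Fintype ι] [DecidableEq ι] {X : Matrix ι ι ℂ}
    (h1 : X.PosSemidef) (h2 : (-X).PosSemidef) : X = 0 := by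
  have hx : ∀ v, X *ᵥ v = 0 := by
    intro v
    have a := h1.dotProduct_mulVec_nonneg v
    have b := h2.dotProduct_mulVec_nonneg v
    rw [Matrix.neg_mulVec, dotProduct_neg] at b
    have h0 : dotProduct (star v) (X *ᵥ v) = 0 :=
      le_antisymm (neg_nonneg.mp b) a
    exact (h1.dotProduct_mulVec_zero_iff v).mp h0
  ext i j
  have := congrFun (hx (Pi.single j 1)) i
  simpa using this

open scoped MatrixOrder in
lemma state_re_nonneg {ι : Type*} [Fintype ι] [DecidableEq ι]
    {ω : Matrix ι ι ℂ →ₗ[ℂ] ℂ} (hω : IsState ω) {a : Matrix ι ι ℂ}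
    (ha : a.PosSemidef) : 0 ≤ (ω a).re := by
  obtain ⟨B, rfl⟩ := CStarAlgebra.nonneg_iff_eq_star_mul_self.mp ha.nonneg
  have h := hω.2 B
  simpa [Matrix.star_eq_conjTranspose] using (Complex.le_def.mp h).1

/-- Proposition 2.9 (first part): `γ(e ⊗ f) = min{φ(e), ψ(f)}` for projections `e`, `f`. -/
theorem stmt5 {n m : ℕ} (hn : 0 < n) (hm : 0 < m)
    (φ : Mat n →ₗ[ℂ] ℂ) (ψ : Mat m →ₗ[ℂ] ℂ) (hφ : IsState φ) (hψ : IsState ψ)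
    (e : Mat n) (f : Mat m) (he : IsProjM e) (hf : IsProjM f) :
    gamma φ ψ (e ⊗ₖ f) = min (φ e).re (ψ f).re := by
  apply IsLeast.csInf_eq
  constructor
  · -- membership : min is attained
    rcases le_total (φ e).re (ψ f).re with hle | hle
    · refine ⟨e, 0, he, ⟨Matrix.isHermitian_zero, by simp⟩, ?_, ?_⟩
      · show (e ⊗ₖ (1 : Mat m) + (1 : Mat n) ⊗ₖ (0 : Mat m) - e ⊗ₖ (0 : Mat m)
            - e ⊗ₖ f).PosSemidef
        have h1 : e ⊗ₖ (1 : Mat m) + (1 : Mat n) ⊗ₖ (0 : Mat m) - e ⊗ₖ (0 : Mat m)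
            - e ⊗ₖ f = e ⊗ₖ (1 - f) := by
          ext ⟨i, i'⟩ ⟨j, j'⟩
          simp [Matrix.kroneckerMap_apply, mul_sub]
        rw [h1]
        exact (he.kron hf.one_sub).psd
      · rw [map_zero, add_zero, min_eq_left hle]
    · refine ⟨0, f, ⟨Matrix.isHermitian_zero, by simp⟩, hf, ?_, ?_⟩
      · show ((0 : Mat n) ⊗ₖ (1 : Mat m) + (1 : Mat n) ⊗ₖ f - (0 : Mat n) ⊗ₖ f
            - e ⊗ₖ f).PosSemidef
        have h1 : (0 : Mat n) ⊗ₖ (1 : Mat m) + (1 : Mat n) ⊗ₖ f - (0 : Mat n) ⊗ₖ f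
            - e ⊗ₖ f = (1 - e) ⊗ₖ f := by
          ext ⟨i, i'⟩ ⟨j, j'⟩
          simp [Matrix.kroneckerMap_apply, sub_mul]
        rw [h1]
        exact (he.one_sub.kron hf).psd
      · rw [map_zero, zero_add, min_eq_right hle]
  · -- lower bound
    rintro r ⟨p, q, hp, hq, hL, rfl⟩
    set P : Mat2 n m := p ⊗ₖ (1 : Mat m) + (1 : Mat n) ⊗ₖ q - p ⊗ₖ q with hPdef
    set R : Mat2 n m := (1 - p) ⊗ₖ (1 - q) with hRdef
    have hp0 : p * (1 - p) = 0 := by rw [mul_sub, mul_one, hp.2]; simp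
    have hq0 : q * (1 - q) = 0 := by rw [mul_sub, mul_one, hq.2]; simp
    have hp0' : (1 - p) * p = 0 := by rw [sub_mul, one_mul, hp.2]; simp
    have hq0' : (1 - q) * q = 0 := by rw [sub_mul, one_mul, hq.2]; simp
    have hRP : R * P = 0 := by
      rw [hRdef, hPdef, mul_sub, mul_add]
      simp only [← Matrix.mul_kronecker_mul]
      rw [hp0', hq0']
      simp
    have hRproj : IsProjM R := hp.one_sub.kron hq.one_sub
    have hEproj : IsProjM (e ⊗ₖ f) := he.kron hf
    -- R * (e ⊗ f) * R = 0
    have hkey : R * (e ⊗ₖ f) * R = 0 := by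
      apply psd_neg_eq_zero
      · have h1 : R * (e ⊗ₖ f) * R = Rᴴ * (e ⊗ₖ f) * R := by rw [hRproj.1.eq]
        rw [h1]
        exact hEproj.psd.conjTranspose_mul_mul_same R
      · have h2 := hL.conjTranspose_mul_mul_same R
        have h3 : Rᴴ * (P - e ⊗ₖ f) * R = -(R * (e ⊗ₖ f) * R) := by
          rw [hRproj.1.eq, mul_sub, sub_mul, hRP]
          simp
        rwa [h3] at h2
    have hER : (e ⊗ₖ f) * R = 0 := by
      have h1 : ((e ⊗ₖ f) * R)ᴴ * ((e ⊗ₖ f) * R) = R * (e ⊗ₖ f) * R := by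
        rw [Matrix.conjTranspose_mul, hRproj.1.eq, hEproj.1.eq]
        rw [mul_assoc, ← mul_assoc (e ⊗ₖ f), hEproj.2, ← mul_assoc]
      exact Matrix.conjTranspose_mul_self_eq_zero.mp (h1.trans hkey)
    have hfact : (e * (1 - p)) ⊗ₖ (f * (1 - q)) = 0 := by
      rw [Matrix.mul_kronecker_mul]; exact hER
    have hψq : 0 ≤ (ψ q).re := state_re_nonneg hψ hq.psd
    have hφp : 0 ≤ (φ p).re := state_re_nonneg hφ hp.psd
    rw [Complex.add_re]
    rcases kron_eq_zero hfact with h0 | h0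
    · -- e ≤ p
      have hep : e * p = e := by
        have := sub_eq_zero.mpr h0.symm  -- not quite; do directly
        have h1 : e * 1 - e * p = 0 := by rw [← mul_sub]; exact h0
        rw [mul_one] at h1
        linear_combination (norm := noncomm_ring) -h1
      have hpe : p * e = e := by
        have := congrArg Matrix.conjTranspose hep
        rwa [Matrix.conjTranspose_mul, hp.1.eq, he.1.eq] at this
      have hpsd : (p - e).PosSemidef := by
        have h1 : p - e = (p - e)ᴴ * (p - e) := by
          rw [Matrix.conjTranspose_sub, hp.1.eq, he.1.eq, sub_mul, mul_sub, mul_sub,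
            hp.2, he.2, hpe, hep]
          abel
        exact h1 ▸ Matrix.posSemidef_conjTranspose_mul_self (p - e)
      have hmono : (φ e).re ≤ (φ p).re := by
        have := state_re_nonneg hφ hpsd
        rw [map_sub, Complex.sub_re] at this
        linarith
      calc min (φ e).re (ψ f).re ≤ (φ e).re := min_le_left _ _
        _ ≤ (φ p).re + (ψ q).re := by linarith
    · -- f ≤ q
      have hfq : f * q = f := by
        have h1 : f * 1 - f * q = 0 := by rw [← mul_sub]; exact h0
        rw [mul_one] at h1
        linear_combination (norm := noncomm_ring) -h1
      have hqf : q * f = f := by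
        have := congrArg Matrix.conjTranspose hfq
        rwa [Matrix.conjTranspose_mul, hq.1.eq, hf.1.eq] at this
      have hpsd : (q - f).PosSemidef := by
        have h1 : q - f = (q - f)ᴴ * (q - f) := by
          rw [Matrix.conjTranspose_sub, hq.1.eq, hf.1.eq, sub_mul, mul_sub, mul_sub,
            hq.2, hf.2, hqf, hfq]
          abel
        exact h1 ▸ Matrix.posSemidef_conjTranspose_mul_self (q - f)
      have hmono : (ψ f).re ≤ (ψ q).re := by
        have := state_re_nonneg hψ hpsd
        rw [map_sub, Complex.sub_re] at this
        linarith
      calc min (φ e).re (ψ f).re ≤ (ψ f).re := min_le_right _ _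
        _ ≤ (φ p).re + (ψ q).re := by linarith

end
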